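/- For every even integer n ≥ 2, the sum over all permutations σ of [n] of (-1) raised to the number of indices of σ that are either left-to-right maxima or right-to-left minima equals 2^(n-1). (Hence this statistic exhibits the cyclic sieving phenomenon for involutions with 2^(n-1) fixed points when n is even.) -/

import Mathlib

open Finset Equiv

theorem Equiv.Perm.apply_inv_self {α : Type*} (f : Equiv.Perm α) (x : α) : f (f⁻¹ x) = x :=
  f.apply_symm_apply x

theorem Equiv.Perm.inv_apply_self {α : Type*} (f : Equiv.Perm α) (x : α) : f⁻¹ (f x) = x :=
  f.symm_apply_apply x

namespace LrRl

variable {n : ℕ}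

def cond (σ : Equiv.Perm (Fin n)) (i : Fin n) : Prop :=
  (∀ j : Fin n, j < i → σ j < σ i) ∨ (∀ j : Fin n, i < j → σ i < σ j)

instance (σ : Equiv.Perm (Fin n)) : DecidablePred (cond σ) := fun i => by
  unfold cond; infer_instance

def stat (σ : Equiv.Perm (Fin n)) : ℕ := (univ.filter (cond σ)).card

lemma two_le_val {c : Fin (n + 2)} (h0 : c ≠ 0) (h1 : c ≠ 1) : 2 ≤ c.val := by
  have v0 : c.val ≠ 0 := fun h => h0 (Fin.ext (by simpa using h))
  have v1 : c.val ≠ 1 := fun h => h1 (Fin.ext (by simpa using h))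
  omega

lemma swap01_lt_left {a c : Fin (n + 2)} (h0 : c ≠ 0) (h1 : c ≠ 1) :
    swap 0 1 a < c ↔ a < c := by
  have hc := two_le_val h0 h1
  rw [swap_apply_def]
  split_ifs with ha hb
  · subst ha; simp only [Fin.lt_def, Fin.val_zero, Fin.val_one]; omega
  · subst hb; simp only [Fin.lt_def, Fin.val_zero, Fin.val_one]; omega
  · exact Iff.rfl

lemma swap01_lt_right {a c : Fin (n + 2)} (h0 : c ≠ 0) (h1 : c ≠ 1) :
    c < swap 0 1 a ↔ c < a := by
  have hc := two_le_val h0 h1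
  rw [swap_apply_def]
  split_ifs with ha hb
  · subst ha; simp only [Fin.lt_def, Fin.val_zero, Fin.val_one]; omega
  · subst hb; simp only [Fin.lt_def, Fin.val_zero, Fin.val_one]; omega
  · exact Iff.rfl

/-- the position of value 0 always satisfies the condition (it is a RL min). -/
lemma cond_pos_zero (σ : Equiv.Perm (Fin (n + 2))) : cond σ (σ⁻¹ 0) := by
  right
  intro l hl
  rw [Equiv.Perm.apply_inv_self]
  refine Fin.pos_iff_ne_zero.mpr fun h => ?_
  have : l = σ⁻¹ 0 := by rw [← h, Equiv.Perm.inv_apply_self]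
  exact absurd (this ▸ hl) (lt_irrefl _)

lemma cond_pos_one (σ : Equiv.Perm (Fin (n + 2))) (h0 : σ 0 ≠ 0) (h1 : σ 0 ≠ 1) :
    cond σ (σ⁻¹ 1) ↔ σ⁻¹ 0 < σ⁻¹ 1 := by
  have hi0 : σ⁻¹ 0 ≠ 0 := fun h => h0 (by
    have := congrArg σ h; rwa [Equiv.Perm.apply_inv_self, eq_comm] at this)
  have hj0 : σ⁻¹ 1 ≠ 0 := fun h => h1 (by
    have := congrArg σ h; rwa [Equiv.Perm.apply_inv_self, eq_comm] at this)
  have hij : σ⁻¹ 0 ≠ σ⁻¹ 1 := fun h => by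
    have := congrArg σ h
    rw [Equiv.Perm.apply_inv_self, Equiv.Perm.apply_inv_self] at this
    simp [Fin.ext_iff] at this
  constructor
  · rintro (hL | hR)
    · exfalso
      have h2 := hL 0 (Fin.pos_iff_ne_zero.mpr hj0)
      rw [Equiv.Perm.apply_inv_self] at h2
      rw [Fin.lt_def, Fin.val_one] at h2
      exact h0 (Fin.ext (by simp only [Fin.val_zero]; omega))
    · by_contra hlt
      have hji : σ⁻¹ 1 < σ⁻¹ 0 := (hij.lt_or_gt).resolve_left hlt
      have := hR (σ⁻¹ 0) hji
      rw [Equiv.Perm.apply_inv_self, Equiv.Perm.apply_inv_self] at this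
      exact absurd this (by simp [Fin.lt_def])
  · intro hlt
    right
    intro l hl
    rw [Equiv.Perm.apply_inv_self]
    have hl0 : σ l ≠ 0 := fun h => by
      have : l = σ⁻¹ 0 := by rw [← h, Equiv.Perm.inv_apply_self]
      subst this; exact absurd (hlt.trans hl) (lt_irrefl _)
    have hl1 : σ l ≠ 1 := fun h => by
      have : l = σ⁻¹ 1 := by rw [← h, Equiv.Perm.inv_apply_self]
      subst this; exact absurd hl (lt_irrefl _)
    have := two_le_val hl0 hl1
    simp only [Fin.lt_def, Fin.val_one]; omega

/-- swapping values 0 and 1 does not affect the condition at other positions -/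
lemma cond_swap_other (σ : Equiv.Perm (Fin (n + 2))) (k : Fin (n + 2))
    (hk0 : σ k ≠ 0) (hk1 : σ k ≠ 1) :
    cond (swap 0 1 * σ) k ↔ cond σ k := by
  unfold cond
  simp only [Equiv.Perm.mul_apply, Equiv.swap_apply_of_ne_of_ne hk0 hk1]
  exact or_congr
    (forall_congr' fun l => imp_congr Iff.rfl (swap01_lt_left hk0 hk1))
    (forall_congr' fun l => imp_congr Iff.rfl (swap01_lt_right hk0 hk1))

lemma signflip (σ : Equiv.Perm (Fin (n + 2))) (h0 : σ 0 ≠ 0) (h1 : σ 0 ≠ 1) :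
    (-1 : ℤ) ^ stat (swap 0 1 * σ) + (-1 : ℤ) ^ stat σ = 0 := by
  set s : Equiv.Perm (Fin (n + 2)) := swap 0 1 * σ with hsdef
  have hs0 : s 0 = σ 0 := by
    rw [hsdef, Equiv.Perm.mul_apply]
    exact Equiv.swap_apply_of_ne_of_ne h0 h1
  have hs00 : s 0 ≠ 0 := by rw [hs0]; exact h0
  have hs01 : s 0 ≠ 1 := by rw [hs0]; exact h1
  have hsinv0 : s⁻¹ 0 = σ⁻¹ 1 := by
    rw [hsdef, mul_inv_rev, Equiv.Perm.mul_apply, Equiv.swap_inv, Equiv.swap_apply_left]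
  have hsinv1 : s⁻¹ 1 = σ⁻¹ 0 := by
    rw [hsdef, mul_inv_rev, Equiv.Perm.mul_apply, Equiv.swap_inv, Equiv.swap_apply_right]
  have hij : σ⁻¹ 0 ≠ σ⁻¹ 1 := fun h => by
    have := congrArg σ h
    rw [Equiv.Perm.apply_inv_self, Equiv.Perm.apply_inv_self] at this
    simp [Fin.ext_iff] at this
  have hci : cond σ (σ⁻¹ 0) := cond_pos_zero σ
  have hcj : cond σ (σ⁻¹ 1) ↔ σ⁻¹ 0 < σ⁻¹ 1 := cond_pos_one σ h0 h1
  have hcsj : cond s (σ⁻¹ 1) := by have := cond_pos_zero s; rwa [hsinv0] at this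
  have hcsi : cond s (σ⁻¹ 0) ↔ σ⁻¹ 1 < σ⁻¹ 0 := by
    have := cond_pos_one s hs00 hs01; rwa [hsinv0, hsinv1] at this
  have hother : ∀ k, k ≠ σ⁻¹ 0 → k ≠ σ⁻¹ 1 → (cond s k ↔ cond σ k) := by
    intro k hki hkj
    have hk0 : σ k ≠ 0 := fun h => hki (by rw [← h, Equiv.Perm.inv_apply_self])
    have hk1 : σ k ≠ 1 := fun h => hkj (by rw [← h, Equiv.Perm.inv_apply_self])
    exact cond_swap_other σ k hk0 hk1
  by_cases hlt : σ⁻¹ 0 < σ⁻¹ 1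
  · have hfil : filter (cond s) univ = (filter (cond σ) univ).erase (σ⁻¹ 0) := by
      ext k
      constructor
      · intro hk
        obtain ⟨-, hcs⟩ := mem_filter.mp hk
        by_cases hki : k = σ⁻¹ 0
        · subst hki; exact absurd (hcsi.mp hcs) (asymm hlt)
        · refine mem_erase.mpr ⟨hki, mem_filter.mpr ⟨mem_univ _, ?_⟩⟩
          by_cases hkj : k = σ⁻¹ 1
          · subst hkj; exact hcj.mpr hlt
          · exact (hother k hki hkj).mp hcs
      · intro hk
        obtain ⟨hki, hk'⟩ := mem_erase.mp hk
        obtain ⟨-, hcσ⟩ := mem_filter.mp hk'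
        refine mem_filter.mpr ⟨mem_univ _, ?_⟩
        by_cases hkj : k = σ⁻¹ 1
        · subst hkj; exact hcsj
        · exact (hother k hki hkj).mpr hcσ
    have hmem : σ⁻¹ 0 ∈ filter (cond σ) univ := mem_filter.mpr ⟨mem_univ _, hci⟩
    have hcard : stat s + 1 = stat σ := by
      rw [stat, stat, hfil, Finset.card_erase_add_one hmem]
    rw [← hcard, pow_succ]; ring
  · have hji : σ⁻¹ 1 < σ⁻¹ 0 := (hij.lt_or_gt).resolve_left hlt
    have hfil : filter (cond s) univ = insert (σ⁻¹ 1) (filter (cond σ) univ) := by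
      ext k
      constructor
      · intro hk
        obtain ⟨-, hcs⟩ := mem_filter.mp hk
        by_cases hkj : k = σ⁻¹ 1
        · subst hkj; exact mem_insert_self _ _
        · refine mem_insert_of_mem (mem_filter.mpr ⟨mem_univ _, ?_⟩)
          by_cases hki : k = σ⁻¹ 0
          · subst hki; exact hci
          · exact (hother k hki hkj).mp hcs
      · intro hk
        rcases mem_insert.mp hk with rfl | hk'
        · exact mem_filter.mpr ⟨mem_univ _, hcsj⟩
        · obtain ⟨-, hcσ⟩ := mem_filter.mp hk'
          refine mem_filter.mpr ⟨mem_univ _, ?_⟩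
          by_cases hki : k = σ⁻¹ 0
          · subst hki; exact hcsi.mpr hji
          · by_cases hkj : k = σ⁻¹ 1
            · subst hkj; exact absurd (hcj.mp hcσ) (asymm hji)
            · exact (hother k hki hkj).mpr hcσ
    have hnot : σ⁻¹ 1 ∉ filter (cond σ) univ := fun h =>
      absurd (hcj.mp (mem_filter.mp h).2) (asymm hji)
    have hcard : stat s = stat σ + 1 := by
      rw [stat, stat, hfil, Finset.card_insert_of_notMem hnot]
    rw [hcard, pow_succ]; ring

lemma cond_zero_apply_zero (σ : Equiv.Perm (Fin (n + 1))) : cond σ 0 :=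
  Or.inl fun j hj => absurd hj (Fin.not_lt_zero j)

lemma stat_succ_of_cond (σ : Equiv.Perm (Fin (n + 2))) (e : Equiv.Perm (Fin (n + 1)))
    (h0 : cond σ 0) (hs : ∀ k : Fin (n + 1), cond σ k.succ ↔ cond e k) :
    stat σ = stat e + 1 := by
  rw [stat, stat, Finset.card_filter, Finset.card_filter, Fin.sum_univ_succ, if_pos h0]
  rw [add_comm 1]
  congr 1
  exact Finset.sum_congr rfl fun k _ => if_congr (hs k) rfl rfl

lemma stat_decompose_zero (e : Equiv.Perm (Fin (n + 1))) :
    stat (Equiv.Perm.decomposeFin.symm (0, e)) = stat e + 1 := by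
  set σ := Equiv.Perm.decomposeFin.symm (0, e) with hσ
  have hzero : σ 0 = 0 := Equiv.Perm.decomposeFin_symm_apply_zero 0 e
  have hsucc : ∀ x : Fin (n + 1), σ x.succ = (e x).succ := by
    intro x
    rw [hσ, Equiv.Perm.decomposeFin_symm_apply_succ, Equiv.swap_self, Equiv.refl_apply]
  refine stat_succ_of_cond σ e (cond_zero_apply_zero σ) fun k => ?_
  unfold cond
  apply or_congr
  · constructor
    · intro h j hj
      have := h j.succ (Fin.succ_lt_succ_iff.mpr hj)
      rwa [hsucc, hsucc, Fin.succ_lt_succ_iff] at this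
    · intro h j hj
      rcases Fin.eq_zero_or_eq_succ j with rfl | ⟨m, rfl⟩
      · rw [hzero, hsucc]; exact Fin.succ_pos _
      · rw [hsucc, hsucc, Fin.succ_lt_succ_iff]
        exact h m (Fin.succ_lt_succ_iff.mp hj)
  · constructor
    · intro h j hj
      have := h j.succ (Fin.succ_lt_succ_iff.mpr hj)
      rwa [hsucc, hsucc, Fin.succ_lt_succ_iff] at this
    · intro h j hj
      rcases Fin.eq_zero_or_eq_succ j with rfl | ⟨m, rfl⟩
      · exact absurd hj (Fin.not_lt_zero _)
      · rw [hsucc, hsucc, Fin.succ_lt_succ_iff]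
        exact h m (Fin.succ_lt_succ_iff.mp hj)

lemma sw1 (a : Fin (n + 1)) :
    swap (0 : Fin (n + 2)) 1 a.succ = if a = 0 then 0 else a.succ := by
  by_cases ha : a = 0
  · subst ha; simp [Fin.succ_zero_eq_one]
  · rw [if_neg ha]
    refine Equiv.swap_apply_of_ne_of_ne (Fin.succ_ne_zero a) fun h => ha ?_
    rwa [← Fin.succ_zero_eq_one, Fin.succ_inj] at h

lemma sw1_lt_sw1 {a b : Fin (n + 1)} :
    swap (0 : Fin (n + 2)) 1 a.succ < swap (0 : Fin (n + 2)) 1 b.succ ↔ a < b := by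
  rw [sw1, sw1]
  by_cases ha : a = 0 <;> by_cases hb : b = 0
  · subst ha; subst hb; simp
  · subst ha; rw [if_pos rfl, if_neg hb]
    have hbv : b.val ≠ 0 := fun hv => hb (Fin.ext hv)
    simp only [Fin.lt_def, Fin.val_zero, Fin.val_succ]
    omega
  · subst hb; rw [if_neg ha, if_pos rfl]
    have hav : a.val ≠ 0 := fun hv => ha (Fin.ext hv)
    simp only [Fin.lt_def, Fin.val_zero, Fin.val_succ]
    omega
  · rw [if_neg ha, if_neg hb]
    exact Fin.succ_lt_succ_iff

lemma one_lt_sw1 {b : Fin (n + 1)} :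
    (1 : Fin (n + 2)) < swap (0 : Fin (n + 2)) 1 b.succ ↔ b ≠ 0 := by
  rw [sw1]
  by_cases hb : b = 0
  · simp only [hb, if_true, if_pos]
    simp [Fin.lt_def]
  · simp only [if_neg hb]
    have : b.val ≠ 0 := fun hv => hb (Fin.ext hv)
    simp only [Fin.lt_def, Fin.val_one, Fin.val_succ]
    constructor
    · intro _; exact hb
    · intro _; omega

lemma stat_decompose_one (e : Equiv.Perm (Fin (n + 1))) :
    stat (Equiv.Perm.decomposeFin.symm (1, e)) = stat e + 1 := by
  set σ := Equiv.Perm.decomposeFin.symm (1, e) with hσ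
  have hzero : σ 0 = 1 := Equiv.Perm.decomposeFin_symm_apply_zero 1 e
  have hsucc : ∀ x : Fin (n + 1), σ x.succ = swap (0 : Fin (n + 2)) 1 (e x).succ := by
    intro x
    rw [hσ, Equiv.Perm.decomposeFin_symm_apply_succ]
  refine stat_succ_of_cond σ e (cond_zero_apply_zero σ) fun k => ?_
  have hLR : (∀ j, j < k.succ → σ j < σ k.succ) ↔ (e k ≠ 0 ∧ ∀ j, j < k → e j < e k) := by
    constructor
    · intro h
      refine ⟨?_, fun j hj => ?_⟩
      · have := h 0 (Fin.succ_pos k)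
        rw [hzero, hsucc] at this
        exact one_lt_sw1.mp this
      · have := h j.succ (Fin.succ_lt_succ_iff.mpr hj)
        rw [hsucc, hsucc] at this
        exact sw1_lt_sw1.mp this
    · rintro ⟨hne, h⟩ j hj
      rcases Fin.eq_zero_or_eq_succ j with rfl | ⟨m, rfl⟩
      · rw [hzero, hsucc]; exact one_lt_sw1.mpr hne
      · rw [hsucc, hsucc]
        exact sw1_lt_sw1.mpr (h m (Fin.succ_lt_succ_iff.mp hj))
  have hRL : (∀ j, k.succ < j → σ k.succ < σ j) ↔ (∀ j, k < j → e k < e j) := by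
    constructor
    · intro h j hj
      have := h j.succ (Fin.succ_lt_succ_iff.mpr hj)
      rw [hsucc, hsucc] at this
      exact sw1_lt_sw1.mp this
    · intro h j hj
      rcases Fin.eq_zero_or_eq_succ j with rfl | ⟨m, rfl⟩
      · exact absurd hj (Fin.not_lt_zero _)
      · rw [hsucc, hsucc]
        exact sw1_lt_sw1.mpr (h m (Fin.succ_lt_succ_iff.mp hj))
  unfold cond
  rw [hLR, hRL]
  constructor
  · rintro (⟨-, h⟩ | h)
    · exact Or.inl h
    · exact Or.inr h
  · rintro (h | h)
    · by_cases hek : e k = 0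
      · refine Or.inr fun j hj => ?_
        rw [hek]
        refine Fin.pos_iff_ne_zero.mpr fun hz => ?_
        have : j = k := e.injective (by rw [hz, hek])
        subst this; exact absurd hj (lt_irrefl _)
      · exact Or.inl ⟨hek, h⟩
    · exact Or.inr h

lemma decomposeFin_fst (σ : Equiv.Perm (Fin (n + 1))) :
    (Equiv.Perm.decomposeFin σ).1 = σ 0 := by
  have h := Equiv.Perm.decomposeFin_symm_apply_zero
    (Equiv.Perm.decomposeFin σ).1 (Equiv.Perm.decomposeFin σ).2
  rw [Prod.mk.eta, Equiv.symm_apply_apply] at h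
  exact h.symm

lemma sum_fiber (p : Fin (n + 2)) :
    ∑ σ ∈ univ.filter (fun σ : Equiv.Perm (Fin (n + 2)) => σ 0 = p), (-1 : ℤ) ^ stat σ
      = ∑ e : Equiv.Perm (Fin (n + 1)),
          (-1 : ℤ) ^ stat (Equiv.Perm.decomposeFin.symm (p, e)) := by
  have left_inv : ∀ σ ∈ univ.filter (fun σ : Equiv.Perm (Fin (n + 2)) => σ 0 = p),
      Equiv.Perm.decomposeFin.symm (p, (Equiv.Perm.decomposeFin σ).2) = σ := by
    intro σ hσ
    have hp : (Equiv.Perm.decomposeFin σ).1 = p := by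
      rw [decomposeFin_fst]; exact (mem_filter.mp hσ).2
    rw [← hp, Prod.mk.eta, Equiv.symm_apply_apply]
  refine Finset.sum_nbij' (fun σ => (Equiv.Perm.decomposeFin σ).2)
    (fun e => Equiv.Perm.decomposeFin.symm (p, e)) (fun _ _ => mem_univ _) ?_ left_inv ?_ ?_
  · intro e _
    refine mem_filter.mpr ⟨mem_univ _, ?_⟩
    exact Equiv.Perm.decomposeFin_symm_apply_zero p e
  · intro e _
    show (Equiv.Perm.decomposeFin (Equiv.Perm.decomposeFin.symm (p, e))).2 = e
    rw [Equiv.apply_symm_apply]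
  · intro σ hσ
    rw [left_inv σ hσ]

lemma sum_other :
    ∑ σ ∈ univ.filter (fun σ : Equiv.Perm (Fin (n + 2)) => ¬σ 0 = 0 ∧ ¬σ 0 = 1),
      (-1 : ℤ) ^ stat σ = 0 := by
  refine Finset.sum_involution (fun σ _ => swap 0 1 * σ) ?_ ?_ ?_ ?_
  · intro σ hσ
    obtain ⟨h0, h1⟩ := (mem_filter.mp hσ).2
    rw [add_comm]
    exact signflip σ h0 h1
  · intro σ hσ _ h
    have h2 := DFunLike.congr_fun h (σ⁻¹ 0)
    rw [Equiv.Perm.mul_apply, Equiv.Perm.apply_inv_self, Equiv.swap_apply_left] at h2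
    simp [Fin.ext_iff] at h2
  · intro σ hσ
    obtain ⟨h0, h1⟩ := (mem_filter.mp hσ).2
    refine mem_filter.mpr ⟨mem_univ _, ?_⟩
    rw [Equiv.Perm.mul_apply, Equiv.swap_apply_of_ne_of_ne h0 h1]
    exact ⟨h0, h1⟩
  · intro σ _
    show swap 0 1 * (swap 0 1 * σ) = σ
    rw [← mul_assoc, Equiv.swap_mul_self, one_mul]

lemma main_rec : ∀ m : ℕ, (∑ σ : Equiv.Perm (Fin (m + 1)), (-1 : ℤ) ^ stat σ) = -(-2) ^ m := by
  intro m
  induction m with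
  | zero =>
    have h1 : ∀ σ : Equiv.Perm (Fin 1), stat σ = 1 := by
      intro σ
      rw [stat]
      have hu : filter (cond σ) univ = univ :=
        Finset.filter_true_of_mem fun i _ => Subsingleton.elim (0 : Fin 1) i ▸
          cond_zero_apply_zero σ
      rw [hu]
      simp
    simp [h1, Finset.sum_const, Fintype.card_perm]
  | succ k ih =>
    have hA : ∑ σ ∈ univ.filter (fun σ : Equiv.Perm (Fin (k + 2)) => σ 0 = 0),
        (-1 : ℤ) ^ stat σ = (-2) ^ k := by
      rw [sum_fiber 0]
      have hterm : ∀ e : Equiv.Perm (Fin (k + 1)),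
          (-1 : ℤ) ^ stat (Equiv.Perm.decomposeFin.symm (0, e)) = -(-1 : ℤ) ^ stat e := by
        intro e; rw [stat_decompose_zero, pow_succ]; ring
      rw [Finset.sum_congr rfl fun e _ => hterm e, Finset.sum_neg_distrib, ih]
      ring
    have hB : ∑ σ ∈ univ.filter (fun σ : Equiv.Perm (Fin (k + 2)) => σ 0 = 1),
        (-1 : ℤ) ^ stat σ = (-2) ^ k := by
      rw [sum_fiber 1]
      have hterm : ∀ e : Equiv.Perm (Fin (k + 1)),
          (-1 : ℤ) ^ stat (Equiv.Perm.decomposeFin.symm (1, e)) = -(-1 : ℤ) ^ stat e := by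
        intro e; rw [stat_decompose_one, pow_succ]; ring
      rw [Finset.sum_congr rfl fun e _ => hterm e, Finset.sum_neg_distrib, ih]
      ring
    have hD : (univ.filter (fun σ : Equiv.Perm (Fin (k + 2)) => ¬σ 0 = 0)).filter
        (fun σ => σ 0 = 1) = univ.filter (fun σ : Equiv.Perm (Fin (k + 2)) => σ 0 = 1) := by
      rw [Finset.filter_filter]
      refine Finset.filter_congr fun σ _ => ⟨fun h => h.2, fun h => ⟨fun h0 => ?_, h⟩⟩
      rw [h] at h0
      simp [Fin.ext_iff] at h0
    have key := Finset.sum_filter_add_sum_filter_not (univ : Finset (Equiv.Perm (Fin (k + 2))))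
      (fun σ => σ 0 = 0) (fun σ => (-1 : ℤ) ^ stat σ)
    have key2 := Finset.sum_filter_add_sum_filter_not
      (univ.filter (fun σ : Equiv.Perm (Fin (k + 2)) => ¬σ 0 = 0))
      (fun σ => σ 0 = 1) (fun σ => (-1 : ℤ) ^ stat σ)
    rw [hD, Finset.filter_filter, sum_other, hB] at key2
    rw [← key, hA, ← key2, pow_succ]
    ring

end LrRl

open LrRl in
theorem lr_max_or_rl_min_q_eq_neg_one (n : ℕ) (hn : 2 ≤ n) (hpar : Even n) :
    ∑ σ : Equiv.Perm (Fin n),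
      (-1 : ℤ) ^ (univ.filter (fun i : Fin n =>
        (∀ j : Fin n, j < i → σ j < σ i) ∨ (∀ j : Fin n, i < j → σ i < σ j))).card
      = 2 ^ (n - 1) := by
  obtain ⟨m, rfl⟩ : ∃ m, n = m + 1 := ⟨n - 1, by omega⟩
  have hodd : Odd m := by
    rcases Nat.even_or_odd m with h | h
    · exact absurd hpar (by simp [Nat.even_add_one, h])
    · exact h
  have hfe : ∀ σ : Equiv.Perm (Fin (m + 1)),
      (univ.filter (fun i : Fin (m+1) =>
        (∀ j : Fin (m+1), j < i → σ j < σ i) ∨ (∀ j : Fin (m+1), i < j → σ i < σ j))).card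
      = stat σ := by
    intro σ
    unfold stat
    congr 1
  simp only [hfe]
  rw [main_rec m, hodd.neg_pow]
  simp
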